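/- Fix an integer m ≥ 1 and a real sequence a = (a_k). Define the lower-triangular matrix V = (v_{nk}) by v_{nk} = Σ_{j=k}^{n} a_j B_{jk} for 1 ≤ k ≤ n, where B is the inverse triangle of H^(m). Then a belongs to the β-dual of h_∞(Δ^(m)) — i.e. the series Σ_k a_k x_k converges for every x ∈ h_∞(Δ^(m)) — if and only if V ∈ (ℓ∞ : c), i.e. for every bounded sequence y the sequence ((Vy)_n)_n = (Σ_{k=1}^{n} v_{nk} y_k)_n converges. -/
import Mathlib


open Filter Finset Topology

/- Real sequences are modelled as functions `ℕ → ℝ`, where the Lean index `n : ℕ`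
corresponds to the paper's index `n + 1` (the paper indexes sequences by `k ≥ 1`).
Thus the paper's entry `h_{nk} = ∑_{i=k}^{n} (-1)^{i-k} C(m, i-k) / (n+i-1)`
(for `1 ≤ k ≤ n`) becomes, with 0-based indices,
`hMat m n k = ∑_{i ∈ Icc k n} (-1)^{i-k} C(m, i-k) / (n+i+1)`. -/

/-- The entries of the triangle matrix `H^(m) = H Δ^(m)` (0-based indexing). -/
noncomputable def hMat (m n k : ℕ) : ℝ :=
  ∑ i ∈ Finset.Icc k n, (-1 : ℝ) ^ (i - k) * (Nat.choose m (i - k) : ℝ) / ((n + i + 1 : ℕ) : ℝ)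

/-- The `H^(m)`-transform of a sequence: `(H^(m) x)_n = ∑_{k=1}^{n} h_{nk} x_k`. -/
noncomputable def hTrans (m : ℕ) (x : ℕ → ℝ) (n : ℕ) : ℝ :=
  ∑ k ∈ Finset.range (n + 1), hMat m n k * x k

/-- `h_0(Δ^(m))`: sequences whose `H^(m)`-transform tends to `0`. -/
def hZero (m : ℕ) : Set (ℕ → ℝ) := {x | Tendsto (hTrans m x) atTop (𝓝 0)}

/-- `h_c(Δ^(m))`: sequences whose `H^(m)`-transform converges. -/
def hConv (m : ℕ) : Set (ℕ → ℝ) := {x | ∃ L : ℝ, Tendsto (hTrans m x) atTop (𝓝 L)}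

/-- `h_∞(Δ^(m))`: sequences whose `H^(m)`-transform is bounded. -/
def hBdd (m : ℕ) : Set (ℕ → ℝ) := {x | ∃ M : ℝ, ∀ n, |hTrans m x n| ≤ M}

/-- The space `c₀` of null real sequences. -/
def c0Seq : Set (ℕ → ℝ) := {y | Tendsto y atTop (𝓝 0)}

/-- The space `c` of convergent real sequences. -/
def cSeq : Set (ℕ → ℝ) := {y | ∃ L : ℝ, Tendsto y atTop (𝓝 L)}

/-- The space `ℓ∞` of bounded real sequences. -/
def linfSeq : Set (ℕ → ℝ) := {y | ∃ M : ℝ, ∀ n, |y n| ≤ M}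

/-- The sup norm `‖y‖ = sup_n |y_n|` of a sequence. -/
noncomputable def supNorm (y : ℕ → ℝ) : ℝ := ⨆ n, |y n|

/-- The norm `‖x‖ = sup_n |(H^(m) x)_n|` on the Hilbert difference sequence spaces. -/
noncomputable def hNorm (m : ℕ) (x : ℕ → ℝ) : ℝ := supNorm (hTrans m x)

private lemma sum_swap_tri (f : ℕ → ℕ → ℝ) (n : ℕ) :
    ∑ k ∈ Finset.range (n+1), ∑ j ∈ Finset.Icc k n, f j k
      = ∑ j ∈ Finset.range (n+1), ∑ k ∈ Finset.range (j+1), f j k := by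
  apply Finset.sum_comm'
  intro k j
  simp only [Finset.mem_range, Finset.mem_Icc, Nat.lt_succ_iff]
  omega

private lemma right_inv_lemma (m : ℕ) (B : ℕ → ℕ → ℝ)
    (hBright : ∀ n k : ℕ, (∑ j ∈ Finset.Icc k n, hMat m n j * B j k) = if n = k then 1 else 0)
    (y : ℕ → ℝ) (n : ℕ) :
    hTrans m (fun n => ∑ k ∈ Finset.range (n+1), B n k * y k) n = y n := by
  unfold hTrans
  simp only [Finset.mul_sum]
  rw [show (∑ k ∈ Finset.range (n+1), ∑ j ∈ Finset.range (k+1), hMat m n k * (B k j * y j))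
      = ∑ j ∈ Finset.range (n+1), ∑ k ∈ Finset.range (j+1),
          (fun j k => hMat m n j * (B j k * y k)) j k from rfl,
    ← sum_swap_tri]
  have : ∀ k ∈ Finset.range (n+1),
      (∑ j ∈ Finset.Icc k n, hMat m n j * (B j k * y k))
        = (if n = k then 1 else 0) * y k := by
    intro k _
    rw [← hBright n k, Finset.sum_mul]
    exact Finset.sum_congr rfl fun j _ => by ring
  rw [Finset.sum_congr rfl this]
  simp

private lemma left_inv_lemma (m : ℕ) (B : ℕ → ℕ → ℝ)
    (hBleft : ∀ n k : ℕ, (∑ j ∈ Finset.Icc k n, B n j * hMat m j k) = if n = k then 1 else 0)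
    (x : ℕ → ℝ) (n : ℕ) :
    ∑ k ∈ Finset.range (n+1), B n k * hTrans m x k = x n := by
  unfold hTrans
  simp only [Finset.mul_sum]
  rw [show (∑ k ∈ Finset.range (n+1), ∑ j ∈ Finset.range (k+1), B n k * (hMat m k j * x j))
      = ∑ j ∈ Finset.range (n+1), ∑ k ∈ Finset.range (j+1),
          (fun j k => B n j * (hMat m j k * x k)) j k from rfl,
    ← sum_swap_tri]
  have : ∀ k ∈ Finset.range (n+1),
      (∑ j ∈ Finset.Icc k n, B n j * (hMat m j k * x k))
        = (if n = k then 1 else 0) * x k := by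
    intro k _
    rw [← hBleft n k, Finset.sum_mul]
    exact Finset.sum_congr rfl fun j _ => by ring
  rw [Finset.sum_congr rfl this]
  simp

private lemma V_identity (a : ℕ → ℝ) (B : ℕ → ℕ → ℝ) (y : ℕ → ℝ) (n : ℕ) :
    ∑ k ∈ Finset.range (n+1), (∑ j ∈ Finset.Icc k n, a j * B j k) * y k
      = ∑ j ∈ Finset.range (n+1), a j * (∑ k ∈ Finset.range (j+1), B j k * y k) := by
  simp only [Finset.sum_mul, Finset.mul_sum]
  rw [show (∑ k ∈ Finset.range (n+1), ∑ j ∈ Finset.Icc k n, a j * B j k * y k)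
      = ∑ k ∈ Finset.range (n+1), ∑ j ∈ Finset.Icc k n,
          (fun j k => a j * (B j k * y k)) j k from by
        exact Finset.sum_congr rfl fun k _ => Finset.sum_congr rfl fun j _ => by ring,
    sum_swap_tri]

/-- `a` is in the β-dual of `hBdd m` iff the matrix `V`, `v_{nk} = ∑_{j=k}^n a_j B_{jk}`,
maps `linfSeq` into the convergent sequences. -/
theorem hilbert_diff_betaDual_hinf (m : ℕ) (hm : 1 ≤ m) (a : ℕ → ℝ)
    (B : ℕ → ℕ → ℝ)
    (hBtri : ∀ n k : ℕ, n < k → B n k = 0)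
    (hBright : ∀ n k : ℕ, (∑ j ∈ Finset.Icc k n, hMat m n j * B j k) = if n = k then 1 else 0)
    (hBleft : ∀ n k : ℕ, (∑ j ∈ Finset.Icc k n, B n j * hMat m j k) = if n = k then 1 else 0) :
    (∀ x ∈ hBdd m, ∃ L : ℝ,
        Tendsto (fun K => ∑ k ∈ Finset.range K, a k * x k) atTop (𝓝 L)) ↔
    (∀ y ∈ linfSeq, ∃ L : ℝ,
        Tendsto (fun n => ∑ k ∈ Finset.range (n + 1),
          (∑ j ∈ Finset.Icc k n, a j * B j k) * y k) atTop (𝓝 L)) := by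
  constructor
  · intro H y hy
    obtain ⟨M, hM⟩ := hy
    set x : ℕ → ℝ := fun n => ∑ k ∈ Finset.range (n+1), B n k * y k with hx
    have hxy : ∀ n, hTrans m x n = y n := right_inv_lemma m B hBright y
    have hxB : x ∈ hBdd m := ⟨M, fun n => by rw [hxy]; exact hM n⟩
    obtain ⟨L, hL⟩ := H x hxB
    refine ⟨L, ?_⟩
    have h2 : Tendsto (fun n : ℕ => ∑ k ∈ Finset.range (n+1), a k * x k) atTop (𝓝 L) :=
      hL.comp (tendsto_add_atTop_nat 1)
    refine h2.congr fun n => ?_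
    rw [V_identity a B y n]
  · intro H x hx
    set y : ℕ → ℝ := fun n => hTrans m x n with hy
    have hyx : ∀ n, x n = ∑ k ∈ Finset.range (n+1), B n k * y k :=
      fun n => (left_inv_lemma m B hBleft x n).symm
    obtain ⟨M, hM⟩ := hx
    obtain ⟨L, hL⟩ := H y ⟨M, hM⟩
    refine ⟨L, ?_⟩
    rw [← tendsto_add_atTop_iff_nat 1]
    refine hL.congr fun n => ?_
    rw [V_identity a B y n]
    exact Finset.sum_congr rfl fun j _ => by rw [← hyx j]
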